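/- Let f_t(x) = 1{a·x > t} be a halfspace on {-1,1}^n with a ∈ ℝ_{≥0}^n and t ≥ 0. Let ε = Pr[a·x > t] and let β ≥ 0 be minimal such that Pr[a·x > t+β] ≤ ε/3. If a_i > β/2 for some coordinate i, then the influence I_i(f_t) ≥ (2/3)·ε. -/

import Mathlib

open Finset

noncomputable section
open scoped Classical

/-- The ±1 value associated to a Boolean bit. -/
def sgn1 (b : Bool) : ℝ := if b then 1 else -1

/-- Probability of an event under the uniform measure on `{-1,1}^n`. -/
def cubePr (n : ℕ) (P : (Fin n → Bool) → Prop) : ℝ :=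
  ((univ.filter P).card : ℝ) / 2 ^ n

/-- Expectation of a function under the uniform measure on `{-1,1}^n`. -/
def cubeE (n : ℕ) (f : (Fin n → Bool) → ℝ) : ℝ := (∑ x, f x) / 2 ^ n

/-- The linear form `a · x = ∑ aᵢ xᵢ` on `{-1,1}^n`. -/
def lin (n : ℕ) (a : Fin n → ℝ) (x : Fin n → Bool) : ℝ := ∑ i, a i * sgn1 (x i)

/-- The halfspace `1{a · x > t}` as a 0/1-valued function. -/
def halfspace (n : ℕ) (a : Fin n → ℝ) (t : ℝ) (x : Fin n → Bool) : ℝ :=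
  if t < lin n a x then 1 else 0

/-- The influence of coordinate `i` on `f`: the probability that flipping
coordinate `i` changes the value of `f`. -/
def infl (n : ℕ) (i : Fin n) (f : (Fin n → Bool) → ℝ) : ℝ :=
  cubePr n (fun x => f x ≠ f (Function.update x i (!x i)))

/-- The degree-1 Fourier coefficient `f̂({i}) = E[f(x)·xᵢ]`. -/
def fCoeff (n : ℕ) (f : (Fin n → Bool) → ℝ) (i : Fin n) : ℝ :=
  cubeE n (fun x => f x * sgn1 (x i))

/-- The degree-1 Fourier weight `W¹(f) = ∑ᵢ f̂({i})²`. -/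
def W1 (n : ℕ) (f : (Fin n → Bool) → ℝ) : ℝ := ∑ i, (fCoeff n f i) ^ 2


lemma sgn1_not (b : Bool) : sgn1 (!b) = - sgn1 b := by cases b <;> simp [sgn1]

lemma lin_update (n : ℕ) (a : Fin n → ℝ) (x : Fin n → Bool) (i : Fin n) (b : Bool) :
    lin n a (Function.update x i b) = lin n a x - a i * sgn1 (x i) + a i * sgn1 b := by
  unfold lin
  rw [← Finset.add_sum_erase _ _ (Finset.mem_univ i),
      ← Finset.add_sum_erase _ (fun j => a j * sgn1 (x j)) (Finset.mem_univ i)]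
  have h : ∀ j ∈ Finset.univ.erase i,
      a j * sgn1 ((Function.update x i b) j) = a j * sgn1 (x j) := by
    intro j hj
    rw [Function.update_of_ne (Finset.mem_erase.1 hj).1]
  rw [Finset.sum_congr rfl h, Function.update_self]
  ring

lemma flip_flip_update {n : ℕ} (i : Fin n) (x : Fin n → Bool) :
    Function.update (Function.update x i (!x i)) i (!(Function.update x i (!x i) i)) = x := by
  funext j
  by_cases h : j = i
  · subst h; simp
  · simp [Function.update_of_ne h]

/-- **Large coordinates have large influence.** For a halfspace `1{a·x > t}` with
`a ≥ 0`, `t ≥ 0`, `ε = Pr[a·x > t]`, and `β ≥ 0` minimal with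
`Pr[a·x > t+β] ≤ ε/3`: if `aᵢ > β/2` then `Iᵢ(f_t) ≥ (2/3)·ε`. -/
theorem influence_of_big_coordinate (n : ℕ) (a : Fin n → ℝ) (t ε β : ℝ) (i : Fin n)
    (ha : ∀ j, 0 ≤ a j) (ht : 0 ≤ t)
    (hε : ε = cubePr n (fun x => t < lin n a x))
    (hβ : IsLeast {b : ℝ | 0 ≤ b ∧ cubePr n (fun x => t + b < lin n a x) ≤ ε / 3} β)
    (hai : β / 2 < a i) :
    (2 / 3) * ε ≤ infl n i (halfspace n a t) := by
  classical
  set F : (Fin n → Bool) → (Fin n → Bool) := fun x => Function.update x i (!x i) with hF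
  have hFF : ∀ x, F (F x) = x := fun x => flip_flip_update i x
  have hFinj : Function.Injective F := fun x y h => by
    have := congrArg F h; rwa [hFF, hFF] at this
  have hlinF : ∀ x, lin n a (F x) = lin n a x - 2 * a i * sgn1 (x i) := by
    intro x
    rw [hF, lin_update, sgn1_not]; ring
  set A : Finset (Fin n → Bool) := univ.filter (fun x => t < lin n a x) with hA
  set Dp : Finset (Fin n → Bool) :=
    univ.filter (fun x => t < lin n a x ∧ ¬ t < lin n a (F x)) with hDp
  set Dm : Finset (Fin n → Bool) :=
    univ.filter (fun x => ¬ t < lin n a x ∧ t < lin n a (F x)) with hDm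
  set S : Finset (Fin n → Bool) :=
    univ.filter (fun x => t < lin n a x ∧ t < lin n a (F x)) with hS
  set D : Finset (Fin n → Bool) :=
    univ.filter (fun x => halfspace n a t x ≠ halfspace n a t (F x)) with hD
  set B : Finset (Fin n → Bool) := univ.filter (fun x => t + 2 * a i < lin n a x) with hB
  set Cb : Finset (Fin n → Bool) := univ.filter (fun x => t + β < lin n a x) with hCb
  -- halfspace values differ iff the threshold events differ
  have hDalt : D = univ.filter (fun x => ¬ (t < lin n a x ↔ t < lin n a (F x))) := by
    apply Finset.filter_congr
    intro x _
    by_cases h1 : t < lin n a x <;> by_cases h2 : t < lin n a (F x) <;>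
      simp [halfspace, h1, h2]
  -- A splits into Dp and S
  have hAsplit : A.card = S.card + Dp.card := by
    have := Finset.card_filter_add_card_filter_not
      (s := A) (p := fun x => t < lin n a (F x))
    rw [← this]
    congr 1
    · rw [hA, Finset.filter_filter]
    · rw [hA, Finset.filter_filter]
  -- D splits into Dp and Dm
  have hDsplit : D.card = Dp.card + Dm.card := by
    have := Finset.card_filter_add_card_filter_not
      (s := D) (p := fun x => t < lin n a x)
    rw [← this]
    congr 1
    · rw [hDalt, Finset.filter_filter, hDp]
      apply congrArg Finset.card
      ext x
      simp only [Finset.mem_filter, Finset.mem_univ, true_and]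
      tauto
    · rw [hDalt, Finset.filter_filter, hDm]
      apply congrArg Finset.card
      ext x
      simp only [Finset.mem_filter, Finset.mem_univ, true_and]
      tauto
  -- Dm and Dp have the same cardinality (via the flip involution)
  have hDmDp : Dm.card = Dp.card := by
    apply Finset.card_bij' (fun x _ => F x) (fun x _ => F x)
    · intro x hx
      simp only [hDm, Finset.mem_filter, Finset.mem_univ, true_and] at hx
      simp only [hDp, Finset.mem_filter, Finset.mem_univ, true_and]
      rw [hFF]; tauto
    · intro x hx
      simp only [hDp, Finset.mem_filter, Finset.mem_univ, true_and] at hx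
      simp only [hDm, Finset.mem_filter, Finset.mem_univ, true_and]
      rw [hFF]; tauto
    · intro x _; exact hFF x
    · intro x _; exact hFF x
  -- S is at most twice B
  have hSB : S.card ≤ 2 * B.card := by
    have hsplit := Finset.card_filter_add_card_filter_not
      (s := S) (p := fun x => x i = true)
    have h1 : (S.filter (fun x => x i = true)).card ≤ B.card := by
      apply Finset.card_le_card
      intro x hx
      simp only [hS, Finset.mem_filter, Finset.mem_univ, true_and] at hx
      obtain ⟨⟨hx1, hx2⟩, hxi⟩ := hx
      simp only [hB, Finset.mem_filter, Finset.mem_univ, true_and]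
      have := hlinF x
      rw [hxi] at this
      simp [sgn1] at this
      rw [this] at hx2
      linarith
    have h2 : (S.filter (fun x => ¬ x i = true)).card ≤ B.card := by
      apply Finset.card_le_card_of_injOn F
      · intro x hx
        simp only [Finset.mem_coe, hS, Finset.mem_filter, Finset.mem_univ, true_and] at hx
        obtain ⟨⟨hx1, hx2⟩, hxi⟩ := hx
        have hxi' : x i = false := by simpa using hxi
        simp only [Finset.mem_coe, hB, Finset.mem_filter, Finset.mem_univ, true_and]
        have := hlinF x
        rw [hxi'] at this
        simp [sgn1] at this
        rw [this]
        linarith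
      · exact fun x _ y _ h => hFinj h
    calc S.card = (S.filter (fun x => x i = true)).card
          + (S.filter (fun x => ¬ x i = true)).card := hsplit.symm
      _ ≤ B.card + B.card := Nat.add_le_add h1 h2
      _ = 2 * B.card := (Nat.two_mul _).symm
  -- B ⊆ Cb since β ≤ 2 aᵢ
  have hBC : B.card ≤ Cb.card := by
    apply Finset.card_le_card
    intro x hx
    simp only [hB, Finset.mem_filter, Finset.mem_univ, true_and] at hx
    simp only [hCb, Finset.mem_filter, Finset.mem_univ, true_and]
    linarith
  -- real-number bookkeeping
  have hN : (0:ℝ) < 2 ^ n := by positivity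
  have hCb3 : (Cb.card : ℝ) ≤ ε / 3 * 2 ^ n := by
    have := hβ.1.2
    rw [cubePr] at this
    rw [← hCb] at this
    calc (Cb.card : ℝ) = (Cb.card : ℝ) / 2 ^ n * 2 ^ n := by field_simp
    _ ≤ ε / 3 * 2 ^ n := by
        apply mul_le_mul_of_nonneg_right this (le_of_lt hN)
  have hεA : ε * 2 ^ n = A.card := by
    rw [hε, cubePr, ← hA]; field_simp
  have hinfl : infl n i (halfspace n a t) = (D.card : ℝ) / 2 ^ n := by
    rw [infl, cubePr, hD, hF]
    have : ∀ (s₁ s₂ : Finset (Fin n → Bool)), s₁ = s₂ → ((s₁.card : ℝ) / 2 ^ n = (s₂.card : ℝ) / 2 ^ n) := by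
      intro s₁ s₂ h; rw [h]
    apply this
    ext x
    simp only [Finset.mem_filter]
  rw [hinfl, le_div_iff₀ hN]
  have c1 : (A.card : ℝ) = S.card + Dp.card := by exact_mod_cast hAsplit
  have c2 : (D.card : ℝ) = Dp.card + Dm.card := by exact_mod_cast hDsplit
  have c3 : (Dm.card : ℝ) = Dp.card := by exact_mod_cast hDmDp
  have c4 : (S.card : ℝ) ≤ 2 * B.card := by exact_mod_cast hSB
  have c5 : (B.card : ℝ) ≤ Cb.card := by exact_mod_cast hBC
  linarith

end
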